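/- arXiv:2002.09597 — 6 statements merged into one kernel-verified Lean document; each statement's English description precedes it below -/
import Mathlib

section
/- Subdividing an edge of a graph does not decrease its pathwidth: if G' is obtained from G by replacing an edge (u,w) with a path u–x–w through a new vertex x, then pw(G') ≥ pw(G). -/
/-- A path decomposition of a graph: a sequence of bags covering all vertices,
with every edge inside some bag, and each vertex's bags forming a contiguous
subsequence. -/
def IsPathDecomp {V : Type*} (G : SimpleGraph V) {n : ℕ} (B : Fin n → Finset V) : Prop :=
  (∀ v, ∃ i, v ∈ B i) ∧
  (∀ ⦃u v⦄, G.Adj u v → ∃ i, u ∈ B i ∧ v ∈ B i) ∧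
  (∀ v : V, ∀ i j k : Fin n, i ≤ j → j ≤ k → v ∈ B i → v ∈ B k → v ∈ B j)

/-- The pathwidth of a graph: the minimum, over path decompositions, of the
maximum bag size minus one. -/
noncomputable def pathwidth {V : Type*} (G : SimpleGraph V) : ℕ :=
  sInf {w | ∃ (n : ℕ) (B : Fin n → Finset V), IsPathDecomp G B ∧ ∀ i, (B i).card ≤ w + 1}

/-- Subdividing an edge does not decrease pathwidth: if `G'` is obtained from `G`
by replacing the edge `(u,w)` with a path `u – x – w` through a new vertex `x`
(modelled as `none : Option V`), then `pw(G') ≥ pw(G)`. -/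
theorem stmt1 {V : Type*} [Fintype V]
    (G : SimpleGraph V) (u w : V) (huw : G.Adj u w)
    (G' : SimpleGraph (Option V))
    (hG' : ∀ a b : Option V, G'.Adj a b ↔
      ((∃ a' b', a = some a' ∧ b = some b' ∧ G.Adj a' b' ∧
          ¬(a' = u ∧ b' = w) ∧ ¬(a' = w ∧ b' = u))
        ∨ (a = none ∧ (b = some u ∨ b = some w))
        ∨ (b = none ∧ (a = some u ∨ a = some w)))) :
    pathwidth G ≤ pathwidth G' := by
  classical
  have hne : {w' | ∃ (n : ℕ) (B : Fin n → Finset (Option V)), IsPathDecomp G' B ∧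
      ∀ i, (B i).card ≤ w' + 1}.Nonempty := by
    refine ⟨Fintype.card (Option V), 1, fun _ => Finset.univ, ⟨?_, ?_, ?_⟩, ?_⟩
    · intro v; exact ⟨0, Finset.mem_univ v⟩
    · intro a b _; exact ⟨0, Finset.mem_univ a, Finset.mem_univ b⟩
    · intros; exact Finset.mem_univ _
    · intro i; simpa using Nat.le_succ _
  obtain ⟨n, B', hdec, hcard⟩ := Nat.sInf_mem hne
  obtain ⟨hcov, hedge, hcont⟩ := hdec
  set f : Option V → V := fun o => o.getD u with hf
  have hmem : ∀ (v : V) (i : Fin n),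
      v ∈ (B' i).image f ↔ (some v ∈ B' i ∨ (v = u ∧ none ∈ B' i)) := by
    intro v i
    simp only [Finset.mem_image]
    constructor
    · rintro ⟨x, hx, rfl⟩
      cases x with
      | none => exact Or.inr ⟨rfl, hx⟩
      | some y => exact Or.inl hx
    · rintro (h | ⟨rfl, h⟩)
      · exact ⟨some v, h, rfl⟩
      · exact ⟨none, h, rfl⟩
  have hadj_nu : G'.Adj none (some u) := (hG' _ _).2 (Or.inr (Or.inl ⟨rfl, Or.inl rfl⟩))
  obtain ⟨m, hm0, hmu⟩ := hedge hadj_nu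
  have hadj_nw : G'.Adj none (some w) := (hG' _ _).2 (Or.inr (Or.inl ⟨rfl, Or.inr rfl⟩))
  obtain ⟨m', hm'0, hm'w⟩ := hedge hadj_nw
  apply Nat.sInf_le
  refine ⟨n, fun i => (B' i).image f, ⟨?_, ?_, ?_⟩, ?_⟩
  · intro v
    obtain ⟨i, hi⟩ := hcov (some v)
    exact ⟨i, (hmem v i).2 (Or.inl hi)⟩
  · intro a b hab
    by_cases h : (a = u ∧ b = w) ∨ (a = w ∧ b = u)
    · rcases h with ⟨rfl, rfl⟩ | ⟨rfl, rfl⟩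
      · exact ⟨m', (hmem _ _).2 (Or.inr ⟨rfl, hm'0⟩), (hmem _ _).2 (Or.inl hm'w)⟩
      · exact ⟨m', (hmem _ _).2 (Or.inl hm'w), (hmem _ _).2 (Or.inr ⟨rfl, hm'0⟩)⟩
    · rw [not_or] at h
      have hadj : G'.Adj (some a) (some b) :=
        (hG' _ _).2 (Or.inl ⟨a, b, rfl, rfl, hab, h.1, h.2⟩)
      obtain ⟨i, hi1, hi2⟩ := hedge hadj
      exact ⟨i, (hmem _ _).2 (Or.inl hi1), (hmem _ _).2 (Or.inl hi2)⟩
  · intro v i j k hij hjk hvi hvk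
    rw [hmem] at hvi hvk ⊢
    by_cases hvu : v = u
    · subst hvu
      rcases hvi with hi | ⟨_, hi⟩ <;> rcases hvk with hk | ⟨_, hk⟩
      · exact Or.inl (hcont _ i j k hij hjk hi hk)
      · rcases le_total m j with hmj | hjm
        · exact Or.inr ⟨rfl, hcont _ m j k hmj hjk hm0 hk⟩
        · exact Or.inl (hcont _ i j m hij hjm hi hmu)
      · rcases le_total m j with hmj | hjm
        · exact Or.inl (hcont _ m j k hmj hjk hmu hk)
        · exact Or.inr ⟨rfl, hcont _ i j m hij hjm hi hm0⟩
      · exact Or.inr ⟨rfl, hcont _ i j k hij hjk hi hk⟩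
    · rcases hvi with hi | ⟨h, _⟩
      · rcases hvk with hk | ⟨h, _⟩
        · exact Or.inl (hcont _ i j k hij hjk hi hk)
        · exact absurd h hvu
      · exact absurd h hvu
  · intro i; exact le_trans Finset.card_image_le (hcard i)
end

section
/- For every i ≥ 0, the complete ternary tree T_i of height i (a root with three children, each the root of a copy of T_{i−1}; T_0 is a single vertex) has pathwidth at least i. -/
/-- The complete ternary tree of height `i`: vertices are words over `Fin 3` of
length at most `i` (the root is the empty word), and a vertex is adjacent to the
words obtained by prepending one letter (its children). -/
def ternaryTree (i : ℕ) : SimpleGraph {l : List (Fin 3) // l.length ≤ i} :=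
  SimpleGraph.fromRel (fun a b => ∃ d : Fin 3, b.1 = d :: a.1)

namespace TernaryAux

abbrev TV (i : ℕ) := {l : List (Fin 3) // l.length ≤ i}

lemma tt_adj {i : ℕ} {a b : TV i} (d : Fin 3) (h : b.1 = d :: a.1) :
    (ternaryTree i).Adj a b := by
  refine (SimpleGraph.fromRel_adj _ a b).mpr ⟨?_, Or.inl ⟨d, h⟩⟩
  intro e
  subst e
  have := congrArg List.length h
  simp at this

/-- Walk from any vertex to the root, by repeatedly dropping the head. -/
def wtr (i : ℕ) : (l : List (Fin 3)) → (h : l.length ≤ i) →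
    (ternaryTree i).Walk ⟨l, h⟩ ⟨[], Nat.zero_le i⟩
  | [], _ => SimpleGraph.Walk.nil
  | d :: t, h =>
      SimpleGraph.Walk.cons
        ((tt_adj (a := ⟨t, Nat.le_of_succ_le h⟩) (b := ⟨d :: t, h⟩) d rfl).symm)
        (wtr i t (Nat.le_of_succ_le h))

lemma wtr_support {i : ℕ} : ∀ (l : List (Fin 3)) (h : l.length ≤ i) (x : TV i),
    x ∈ (wtr i l h).support → x.1 <:+ l
  | [], h, x, hx => by
    simp only [wtr, SimpleGraph.Walk.support_nil, List.mem_singleton] at hx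
    subst hx
    exact List.nil_suffix
  | d :: t, h, x, hx => by
    simp only [wtr, SimpleGraph.Walk.support_cons, List.mem_cons] at hx
    rcases hx with hx | hx
    · subst hx; exact List.suffix_refl _
    · exact (wtr_support t (Nat.le_of_succ_le h) x hx).trans (List.suffix_cons d t)

/-- Separator property of path decompositions: any bag between a bag containing
`u` and a bag containing `w` must meet every walk from `u` to `w`. -/
lemma separator {V : Type*} {G : SimpleGraph V} {n : ℕ} {B : Fin n → Finset V}
    (hB : IsPathDecomp G B) {u w : V} (W : G.Walk u w) :
    ∀ p q m : Fin n, u ∈ B p → w ∈ B q → p ≤ m → m ≤ q →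
      ∃ x ∈ W.support, x ∈ B m := by
  induction W with
  | nil =>
    intro p q m hp hq hpm hmq
    exact ⟨_, by simp, hB.2.2 _ p m q hpm hmq hp hq⟩
  | @cons a b c hadj W ih =>
    intro p q m hp hq hpm hmq
    obtain ⟨t, hat, hbt⟩ := hB.2.1 hadj
    by_cases htm : t ≤ m
    · obtain ⟨x, hx1, hx2⟩ := ih t q m hbt hq htm hmq
      exact ⟨x, by simp [hx1], hx2⟩
    · have : a ∈ B m := hB.2.2 a p m t hpm (le_of_not_ge htm) hp hat
      exact ⟨a, by simp, this⟩

/-- Embedding of `TV i` into `TV (i+1)` as the subtree of direction `c`. -/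
def emb {i : ℕ} (c : Fin 3) (v : TV i) : TV (i + 1) :=
  ⟨v.1 ++ [c], by simpa using Nat.add_le_add_right v.2 1⟩

lemma emb_injective {i : ℕ} (c : Fin 3) : Function.Injective (emb (i := i) c) := by
  intro a b h
  have : a.1 ++ [c] = b.1 ++ [c] := congrArg Subtype.val h
  exact Subtype.ext (List.append_left_injective [c] this)

lemma emb_adj {i : ℕ} (c : Fin 3) {u v : TV i} (h : (ternaryTree i).Adj u v) :
    (ternaryTree (i + 1)).Adj (emb c u) (emb c v) := by
  simp only [ternaryTree] at h ⊢
  rw [SimpleGraph.fromRel_adj] at h ⊢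
  obtain ⟨hne, hrel⟩ := h
  refine ⟨fun e => hne (emb_injective c e), ?_⟩
  rcases hrel with ⟨d, hd⟩ | ⟨d, hd⟩
  · exact Or.inl ⟨d, by simp [emb, hd]⟩
  · exact Or.inr ⟨d, by simp [emb, hd]⟩

lemma restrict {i n : ℕ} (c : Fin 3) (B : Fin n → Finset (TV (i + 1)))
    (hB : IsPathDecomp (ternaryTree (i + 1)) B) :
    IsPathDecomp (ternaryTree i)
      (fun j => (B j).preimage (emb c) ((emb_injective c).injOn)) := by
  refine ⟨?_, ?_, ?_⟩
  · intro v
    obtain ⟨j, hj⟩ := hB.1 (emb c v)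
    exact ⟨j, Finset.mem_preimage.mpr hj⟩
  · intro u v huv
    obtain ⟨j, hj1, hj2⟩ := hB.2.1 (emb_adj c huv)
    exact ⟨j, Finset.mem_preimage.mpr hj1, Finset.mem_preimage.mpr hj2⟩
  · intro v p q r hpq hqr hp hr
    exact Finset.mem_preimage.mpr
      (hB.2.2 (emb c v) p q r hpq hqr (Finset.mem_preimage.mp hp)
        (Finset.mem_preimage.mp hr))

/-- Pick the middle of three values. -/
lemma middle {α : Type*} [LinearOrder α] (f : Fin 3 → α) :
    ∃ a b c : Fin 3, a ≠ c ∧ b ≠ c ∧ f a ≤ f c ∧ f c ≤ f b := by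
  rcases le_total (f 0) (f 1) with h01 | h10
  · rcases le_total (f 1) (f 2) with h12 | h21
    · exact ⟨0, 2, 1, by decide, by decide, h01, h12⟩
    · rcases le_total (f 0) (f 2) with h02 | h20
      · exact ⟨0, 1, 2, by decide, by decide, h02, h21⟩
      · exact ⟨2, 1, 0, by decide, by decide, h20, h01⟩
  · rcases le_total (f 0) (f 2) with h02 | h20
    · exact ⟨1, 2, 0, by decide, by decide, h10, h02⟩
    · rcases le_total (f 1) (f 2) with h12 | h21
      · exact ⟨1, 0, 2, by decide, by decide, h12, h20⟩
      · exact ⟨2, 0, 1, by decide, by decide, h21, h10⟩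

lemma key : ∀ (i n : ℕ) (B : Fin n → Finset (TV i)),
    IsPathDecomp (ternaryTree i) B → ∃ j, i + 1 ≤ (B j).card := by
  intro i
  induction i with
  | zero =>
    intro n B hB
    obtain ⟨j, hj⟩ := hB.1 ⟨[], le_refl 0⟩
    exact ⟨j, Finset.card_pos.mpr ⟨_, hj⟩⟩
  | succ i ih =>
    intro n B hB
    set Bc : Fin 3 → Fin n → Finset (TV i) :=
      fun c j => (B j).preimage (emb c) ((emb_injective c).injOn) with hBc
    have hdec : ∀ c, IsPathDecomp (ternaryTree i) (Bc c) := fun c => restrict c B hB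
    choose j hj using fun c => ih n (Bc c) (hdec c)
    obtain ⟨a, b, c, hac, hbc, hjac, hjcb⟩ := middle j
    -- pick vertices of copies a and b in the corresponding bags
    obtain ⟨u', hu'⟩ := Finset.card_pos.mp (lt_of_lt_of_le (Nat.succ_pos i) (hj a))
    obtain ⟨w', hw'⟩ := Finset.card_pos.mp (lt_of_lt_of_le (Nat.succ_pos i) (hj b))
    have hu : emb a u' ∈ B (j a) := Finset.mem_preimage.mp hu'
    have hw : emb b w' ∈ B (j b) := Finset.mem_preimage.mp hw'
    -- walk from emb a u' to emb b w' through the root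
    set U : TV (i + 1) := emb a u' with hU
    set Wv : TV (i + 1) := emb b w' with hW
    obtain ⟨x, hxsup, hxm⟩ := separator hB
      ((wtr (i + 1) U.1 U.2).append (wtr (i + 1) Wv.1 Wv.2).reverse) (j a) (j b) (j c)
      hu hw hjac hjcb
    -- x is a suffix of U or of Wv, hence not in copy c
    have hxsuffix : x.1 <:+ U.1 ∨ x.1 <:+ Wv.1 := by
      rw [SimpleGraph.Walk.mem_support_append_iff] at hxsup
      rcases hxsup with h | h
      · exact Or.inl (wtr_support U.1 U.2 x h)
      · rw [SimpleGraph.Walk.support_reverse, List.mem_reverse] at h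
        exact Or.inr (wtr_support Wv.1 Wv.2 x h)
    have hlast : ∀ (y : TV (i+1)) (e : Fin 3) (v' : TV i), y.1 <:+ (emb e v').1 →
        e ≠ c → x = y → x.1.getLast? ≠ some c := by
      rintro y e v' ⟨t, ht⟩ hec rfl hcon
      rcases List.eq_nil_or_concat x.1 with hnil | ⟨l', z, hz⟩
      · rw [hnil] at hcon; simp at hcon
      · have : (emb e v').1.getLast? = some c := by
          rw [← ht, List.getLast?_append_of_ne_nil t (by simp [hz]), hcon]
        simp [emb] at this
        exact hec this
    have hxnotc : x.1.getLast? ≠ some c := by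
      rcases hxsuffix with h | h
      · exact hlast x a u' h hac rfl
      · exact hlast x b w' h hbc rfl
    -- the bag B (j c) contains the image of Bc c (j c) plus x
    have himsub : (Bc c (j c)).image (emb c) ⊆ B (j c) := by
      intro y hy
      obtain ⟨z, hz, rfl⟩ := Finset.mem_image.mp hy
      exact Finset.mem_preimage.mp hz
    have hxnot : x ∉ (Bc c (j c)).image (emb c) := by
      intro hx
      obtain ⟨z, _, rfl⟩ := Finset.mem_image.mp hx
      exact hxnotc (by simp [emb])
    refine ⟨j c, ?_⟩
    have hsub : insert x ((Bc c (j c)).image (emb c)) ⊆ B (j c) :=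
      Finset.insert_subset hxm himsub
    have := Finset.card_le_card hsub
    rw [Finset.card_insert_of_notMem hxnot,
      Finset.card_image_of_injective _ (emb_injective c)] at this
    have := hj c
    omega

end TernaryAux

/-- The complete ternary tree of height `i` has pathwidth at least `i`. -/
theorem stmt2 (i : ℕ) : i ≤ pathwidth (ternaryTree i) := by
  have hfin : Finite (TernaryAux.TV i) :=
    (List.finite_length_le (α := Fin 3) (n := i)).to_subtype
  have : Fintype (TernaryAux.TV i) := Fintype.ofFinite _
  rw [pathwidth]
  refine le_csInf ⟨Fintype.card (TernaryAux.TV i), 1, fun _ => Finset.univ,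
    ⟨fun v => ⟨0, Finset.mem_univ v⟩, fun u v _ => ⟨0, Finset.mem_univ u, Finset.mem_univ v⟩,
      fun v p q r _ _ _ _ => Finset.mem_univ v⟩,
    fun _ => by simp⟩ ?_
  rintro w ⟨n, B, hB, hcard⟩
  obtain ⟨j, hj⟩ := TernaryAux.key i n B hB
  have := hcard j
  omega
end

section
/- Suppose a graph G has an assignment of pairwise-disjoint horizontal segments (bars) to vertices and vertical segments to edges connecting the bars of the edge's endpoints, such that every vertical line in the plane intersects at most k bars. Then pw(G) ≤ k − 1. -/
/-- If `G` has a bar-visibility-style representation — pairwise disjoint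
horizontal bars (vertex `v` gets the bar at height `y v` spanning
`[l v, r v]`), each edge realized by a vertical segment at some `x`-coordinate
lying in the `x`-range of both endpoint bars — in which every vertical line
meets at most `k` bars, then `pw(G) ≤ k - 1`. -/
theorem stmt3 {V : Type*} [Fintype V] [Nonempty V] (G : SimpleGraph V) (k : ℕ)
    (l r y : V → ℝ) (hlr : ∀ v, l v ≤ r v)
    (hdisj : ∀ u v : V, u ≠ v →
      Disjoint {p : ℝ × ℝ | p.2 = y u ∧ p.1 ∈ Set.Icc (l u) (r u)}
               {p : ℝ × ℝ | p.2 = y v ∧ p.1 ∈ Set.Icc (l v) (r v)})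
    (hedge : ∀ ⦃u v⦄, G.Adj u v →
      ∃ x : ℝ, x ∈ Set.Icc (l u) (r u) ∧ x ∈ Set.Icc (l v) (r v))
    (hline : ∀ x : ℝ, ({v : V | l v ≤ x ∧ x ≤ r v}).ncard ≤ k) :
    pathwidth G + 1 ≤ k := by

  classical
  -- k ≥ 1
  obtain ⟨v0⟩ := ‹Nonempty V›
  have hk1 : 1 ≤ k := by
    have h := hline (l v0)
    have hmem : v0 ∈ {v : V | l v ≤ l v0 ∧ l v0 ≤ r v} := ⟨le_refl _, hlr v0⟩
    have : 1 ≤ ({v : V | l v ≤ l v0 ∧ l v0 ≤ r v}).ncard := by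
      have hfin : ({v : V | l v ≤ l v0 ∧ l v0 ≤ r v}).Finite := Set.toFinite _
      exact (Set.ncard_pos hfin).mpr ⟨v0, hmem⟩
    omega
  set n := Fintype.card V with hn
  let e : Fin n ≃ V := (Fintype.equivFin V).symm
  let f : Fin n → ℝ := l ∘ e
  let σ : Fin n → V := e ∘ Tuple.sort f
  have hσbij : Function.Bijective σ := (e.bijective.comp (Tuple.sort f).bijective)
  have hmono : Monotone (l ∘ σ) := Tuple.monotone_sort f
  let B : Fin n → Finset V := fun i =>
    Finset.univ.filter (fun w => l w ≤ l (σ i) ∧ l (σ i) ≤ r w)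
  have hBmem : ∀ (i : Fin n) (w : V), w ∈ B i ↔ (l w ≤ l (σ i) ∧ l (σ i) ≤ r w) := by
    intro i w; simp [B]
  have hcard : ∀ i, (B i).card ≤ k := by
    intro i
    have h := hline (l (σ i))
    have : ({v : V | l v ≤ l (σ i) ∧ l (σ i) ≤ r v}).ncard = (B i).card := by
      rw [Set.ncard_eq_toFinset_card']
      congr 1
      ext w
      simp [B]
    omega
  have hdecomp : IsPathDecomp G B := by
    refine ⟨?_, ?_, ?_⟩
    · intro v
      obtain ⟨i, hi⟩ := hσbij.2 v
      exact ⟨i, (hBmem i v).2 (by rw [hi]; exact ⟨le_refl _, hlr v⟩)⟩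
    · intro u v huv
      obtain ⟨x, ⟨hu1, hu2⟩, hv1, hv2⟩ := hedge huv
      rcases le_total (l u) (l v) with h | h
      · obtain ⟨i, hi⟩ := hσbij.2 v
        exact ⟨i, (hBmem i u).2 (by rw [hi]; exact ⟨h, le_trans hv1 hu2⟩),
          (hBmem i v).2 (by rw [hi]; exact ⟨le_refl _, hlr v⟩)⟩
      · obtain ⟨i, hi⟩ := hσbij.2 u
        exact ⟨i, (hBmem i u).2 (by rw [hi]; exact ⟨le_refl _, hlr u⟩),
          (hBmem i v).2 (by rw [hi]; exact ⟨h, le_trans hu1 hv2⟩)⟩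
    · intro v i j m hij hjm hi hm
      rw [hBmem] at hi hm ⊢
      exact ⟨le_trans hi.1 (hmono hij), le_trans (hmono hjm) hm.2⟩
  have hmemS : (k - 1) ∈ {w | ∃ (n : ℕ) (B : Fin n → Finset V), IsPathDecomp G B ∧
      ∀ i, (B i).card ≤ w + 1} := by
    refine ⟨n, B, hdecomp, fun i => ?_⟩
    have := hcard i
    omega
  have hle : pathwidth G ≤ k - 1 := Nat.sInf_le hmemS
  omega
end

section
/- In a proper h-layer drawing of a graph G (vertices on h horizontal lines, each edge connecting consecutive layers), if Γ is planar (crossing-free), then G has pathwidth at most h − 1. -/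
open Finset

namespace Stmt4Aux

variable {V : Type*} (G : SimpleGraph V) (ℓ : V → ℕ) (pos : V → ℝ)

/-- The prefix is downward closed on each layer. -/
def DClosed (P : Finset V) : Prop :=
  ∀ u y : V, ℓ u = ℓ y → pos u < pos y → y ∈ P → u ∈ P

/-- All split edges within one gap share their prefix endpoint. -/
def OneEnd (P : Finset V) : Prop :=
  ∀ a b a' b' : V, G.Adj a b → a ∈ P → b ∉ P → G.Adj a' b' → a' ∈ P → b' ∉ P →
    min (ℓ a) (ℓ b) = min (ℓ a') (ℓ b') → a = a'

def Inv (P : Finset V) : Prop := DClosed ℓ pos P ∧ OneEnd G ℓ P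

/-- `v` is a leftmost unswept vertex on its layer. -/
def MinU (P : Finset V) (v : V) : Prop :=
  v ∉ P ∧ ∀ y, y ∉ P → ℓ y = ℓ v → pos v ≤ pos y

def BlockedUp (P : Finset V) (v : V) : Prop :=
  ∃ w, G.Adj v w ∧ w ∉ P ∧ ℓ w = ℓ v + 1 ∧
    ∃ u x, G.Adj u x ∧ u ∈ P ∧ x ∉ P ∧ x ≠ v ∧ min (ℓ u) (ℓ x) = ℓ v

def BlockedDown (P : Finset V) (v : V) : Prop :=
  ∃ w, G.Adj v w ∧ w ∉ P ∧ ℓ w + 1 = ℓ v ∧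
    ∃ u x, G.Adj u x ∧ u ∈ P ∧ x ∉ P ∧ x ≠ v ∧ min (ℓ u) (ℓ x) = ℓ w


open Classical in
noncomputable def Front [Fintype V] (P : Finset V) : Finset V :=
  Finset.univ.filter (fun u => u ∈ P ∧ ∃ w, G.Adj u w ∧ w ∉ P)

lemma mem_Front [Fintype V] {P : Finset V} {u : V} :
    u ∈ Front G P ↔ u ∈ P ∧ ∃ w, G.Adj u w ∧ w ∉ P := by
  classical
  simp [Front]

variable {G ℓ pos}

section Lemmas

variable (hinj : ∀ u v, ℓ u = ℓ v → pos u = pos v → u = v)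
  (hproper : ∀ ⦃u v⦄, G.Adj u v → ℓ u = ℓ v + 1 ∨ ℓ v = ℓ u + 1)
  (hplanar : ∀ a b c d, G.Adj a b → G.Adj c d →
      ℓ b = ℓ a + 1 → ℓ d = ℓ c + 1 → ℓ a = ℓ c →
      ¬((pos a < pos c ∧ pos d < pos b) ∨ (pos c < pos a ∧ pos b < pos d)))

include hinj in
lemma pos_lt_mem {P : Finset V} (hd : DClosed ℓ pos P) {u w : V}
    (hu : u ∈ P) (hw : w ∉ P) (hl : ℓ u = ℓ w) : pos u < pos w := by
  rcases lt_trichotomy (pos u) (pos w) with hc | hc | hc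
  · exact hc
  · exact absurd (hinj u w hl hc ▸ hu) hw
  · exact absurd (hd w u hl.symm hc hu) hw

include hinj in
lemma pos_lt_minU {P : Finset V} {v x : V} (hv : MinU ℓ pos P v)
    (hx : x ∉ P) (hl : ℓ x = ℓ v) (hne : x ≠ v) : pos v < pos x :=
  lt_of_le_of_ne (hv.2 x hx hl) (fun he => hne (hinj x v hl he.symm))

lemma minU_exists [Fintype V] (P : Finset V) {z : V} (hz : z ∉ P) :
    ∃ v, MinU ℓ pos P v ∧ ℓ v = ℓ z := by
  classical
  obtain ⟨v, hvS, hmin⟩ := Finset.exists_min_image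
    (univ.filter (fun y => y ∉ P ∧ ℓ y = ℓ z)) pos
    ⟨z, by simp [hz]⟩
  simp only [mem_filter, mem_univ, true_and] at hvS hmin
  exact ⟨v, ⟨hvS.1, fun y hy hly => hmin y ⟨hy, hly.trans hvS.2⟩⟩, hvS.2⟩

include hinj hproper hplanar in
lemma Aup {P : Finset V} {v : V} (hP : Inv G ℓ pos P) (hv : MinU ℓ pos P v)
    (hb : BlockedUp G ℓ P v) :
    ∃ u x, G.Adj u x ∧ u ∈ P ∧ x ∉ P ∧ x ≠ v ∧ ℓ u = ℓ v ∧ ℓ x = ℓ v + 1 ∧ pos u < pos v := by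
  obtain ⟨w, hvw, hwP, hlw, u, x, hux, huP, hxP, hxv, hgap⟩ := hb
  rcases hproper hux with h1 | h1
  · -- ℓ u = ℓ x + 1 : impossible by planarity
    exfalso
    have hlx : ℓ x = ℓ v := by omega
    have hlu : ℓ u = ℓ w := by omega
    have h2 : pos v < pos x := pos_lt_minU hinj hv hxP hlx hxv
    have h3 : pos u < pos w := pos_lt_mem hinj hP.1 huP hwP hlu
    exact hplanar v w x u hvw hux.symm hlw (by omega) hlx.symm (Or.inl ⟨h2, h3⟩)
  · have hlu : ℓ u = ℓ v := by omega
    exact ⟨u, x, hux, huP, hxP, hxv, hlu, by omega,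
      pos_lt_mem hinj hP.1 huP hv.1 hlu⟩

include hinj hproper hplanar in
lemma Adown {P : Finset V} {v : V} (hP : Inv G ℓ pos P) (hv : MinU ℓ pos P v)
    (hb : BlockedDown G ℓ P v) :
    ∃ u x, G.Adj u x ∧ u ∈ P ∧ x ∉ P ∧ x ≠ v ∧ ℓ u = ℓ v ∧ ℓ x + 1 = ℓ v ∧ pos u < pos v := by
  obtain ⟨w, hvw, hwP, hlw, u, x, hux, huP, hxP, hxv, hgap⟩ := hb
  rcases hproper hux with h1 | h1
  · have hlu : ℓ u = ℓ v := by omega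
    exact ⟨u, x, hux, huP, hxP, hxv, hlu, by omega,
      pos_lt_mem hinj hP.1 huP hv.1 hlu⟩
  · -- ℓ x = ℓ u + 1 : impossible by planarity
    exfalso
    have hlx : ℓ x = ℓ v := by omega
    have hlu : ℓ u = ℓ w := by omega
    have h2 : pos v < pos x := pos_lt_minU hinj hv hxP hlx hxv
    have h3 : pos u < pos w := pos_lt_mem hinj hP.1 huP hwP hlu
    exact hplanar w v u x hvw.symm hux (by omega) (by omega) hlu.symm (Or.inr ⟨h3, h2⟩)

include hinj hproper hplanar in
lemma stepUp [Fintype V] {P : Finset V} {v : V} (hP : Inv G ℓ pos P)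
    (hv : MinU ℓ pos P v) (hb : BlockedUp G ℓ P v) :
    ∃ v', MinU ℓ pos P v' ∧ ℓ v' = ℓ v + 1 ∧ ¬ BlockedDown G ℓ P v' := by
  obtain ⟨w, hvw, hwP, hlw, -⟩ := id hb
  obtain ⟨v', hv', hlv'⟩ := minU_exists P hwP
  refine ⟨v', hv', by omega, fun hbd => ?_⟩
  obtain ⟨u₂, x₂, hux₂, hu₂P, hx₂P, _, hl₂, hlx₂, _⟩ := Adown hinj hproper hplanar hP hv' hbd
  obtain ⟨u, x, hux, huP, hxP, _, hlu, hlx, _⟩ := Aup hinj hproper hplanar hP hv hb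
  have := hP.2 u x u₂ x₂ hux huP hxP hux₂ hu₂P hx₂P (by omega)
  have : ℓ u = ℓ u₂ := by rw [this]
  omega

include hinj hproper hplanar in
lemma stepDown [Fintype V] {P : Finset V} {v : V} (hP : Inv G ℓ pos P)
    (hv : MinU ℓ pos P v) (hb : BlockedDown G ℓ P v) :
    ∃ v', MinU ℓ pos P v' ∧ ℓ v' + 1 = ℓ v ∧ ¬ BlockedUp G ℓ P v' := by
  obtain ⟨w, hvw, hwP, hlw, -⟩ := id hb
  obtain ⟨v', hv', hlv'⟩ := minU_exists P hwP
  refine ⟨v', hv', by omega, fun hbu => ?_⟩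
  obtain ⟨u₂, x₂, hux₂, hu₂P, hx₂P, _, hl₂, hlx₂, _⟩ := Aup hinj hproper hplanar hP hv' hbu
  obtain ⟨u, x, hux, huP, hxP, _, hlu, hlx, _⟩ := Adown hinj hproper hplanar hP hv hb
  have := hP.2 u x u₂ x₂ hux huP hxP hux₂ hu₂P hx₂P (by omega)
  have : ℓ u = ℓ u₂ := by rw [this]
  omega

include hinj hproper hplanar in
lemma chaseUp [Fintype V] {P : Finset V} {h : ℕ} (hrange : ∀ v, 1 ≤ ℓ v ∧ ℓ v ≤ h) :
    ∀ k : ℕ, ∀ v : V, Inv G ℓ pos P → MinU ℓ pos P v → ¬ BlockedDown G ℓ P v →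
      h ≤ ℓ v + k →
      ∃ c, MinU ℓ pos P c ∧ ¬ BlockedUp G ℓ P c ∧ ¬ BlockedDown G ℓ P c := by
  intro k
  induction k with
  | zero =>
    intro v hP hv hbd hk
    by_cases hbu : BlockedUp G ℓ P v
    · obtain ⟨w, hvw, hwP, hlw, -⟩ := hbu
      have := (hrange w).2
      omega
    · exact ⟨v, hv, hbu, hbd⟩
  | succ k ih =>
    intro v hP hv hbd hk
    by_cases hbu : BlockedUp G ℓ P v
    · obtain ⟨v', hv', hl', hbd'⟩ := stepUp hinj hproper hplanar hP hv hbu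
      exact ih v' hP hv' hbd' (by omega)
    · exact ⟨v, hv, hbu, hbd⟩

include hinj hproper hplanar in
lemma chaseDown [Fintype V] {P : Finset V} {h : ℕ} (hrange : ∀ v, 1 ≤ ℓ v ∧ ℓ v ≤ h) :
    ∀ k : ℕ, ∀ v : V, Inv G ℓ pos P → MinU ℓ pos P v → ¬ BlockedUp G ℓ P v →
      ℓ v ≤ k + 1 →
      ∃ c, MinU ℓ pos P c ∧ ¬ BlockedUp G ℓ P c ∧ ¬ BlockedDown G ℓ P c := by
  intro k
  induction k with
  | zero =>
    intro v hP hv hbu hk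
    by_cases hbd : BlockedDown G ℓ P v
    · obtain ⟨w, hvw, hwP, hlw, -⟩ := hbd
      have := (hrange w).1
      omega
    · exact ⟨v, hv, hbu, hbd⟩
  | succ k ih =>
    intro v hP hv hbu hk
    by_cases hbd : BlockedDown G ℓ P v
    · obtain ⟨v', hv', hl', hbu'⟩ := stepDown hinj hproper hplanar hP hv hbd
      exact ih v' hP hv' hbu' (by omega)
    · exact ⟨v, hv, hbu, hbd⟩

include hproper in
lemma good_insert [DecidableEq V] {P : Finset V} {v : V} (hP : Inv G ℓ pos P) (hv : MinU ℓ pos P v)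
    (hbu : ¬ BlockedUp G ℓ P v) (hbd : ¬ BlockedDown G ℓ P v) :
    Inv G ℓ pos (insert v P) := by
  constructor
  · intro u y hl hpos hy
    rcases Finset.mem_insert.mp hy with hyv | hyP
    · subst hyv
      by_cases hu : u ∈ P
      · exact Finset.mem_insert_of_mem hu
      · exact absurd hpos (not_lt.mpr (hv.2 u hu hl))
    · exact Finset.mem_insert_of_mem (hP.1 u y hl hpos hyP)
  · intro a b a' b' hab haP hbP ha'b' ha'P hb'P hgap
    have hb1 : b ≠ v ∧ b ∉ P := by
      simpa [Finset.mem_insert, not_or] using hbP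
    have hb'1 : b' ≠ v ∧ b' ∉ P := by
      simpa [Finset.mem_insert, not_or] using hb'P
    rcases Finset.mem_insert.mp haP with hav | haP₀ <;>
      rcases Finset.mem_insert.mp ha'P with ha'v | ha'P₀
    · rw [hav, ha'v]
    · exfalso
      subst hav
      rcases hproper hab with h1 | h1
      · exact hbd ⟨b, hab, hb1.2, h1.symm, a', b', ha'b', ha'P₀, hb'1.2, hb'1.1, by omega⟩
      · exact hbu ⟨b, hab, hb1.2, h1, a', b', ha'b', ha'P₀, hb'1.2, hb'1.1, by omega⟩
    · exfalso
      subst ha'v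
      rcases hproper ha'b' with h1 | h1
      · exact hbd ⟨b', ha'b', hb'1.2, h1.symm, a, b, hab, haP₀, hb1.2, hb1.1, by omega⟩
      · exact hbu ⟨b', ha'b', hb'1.2, h1, a, b, hab, haP₀, hb1.2, hb1.1, by omega⟩
    · exact hP.2 a b a' b' hab haP₀ hb1.2 ha'b' ha'P₀ hb'1.2 hgap

include hinj hproper hplanar in
lemma ext_good [Fintype V] [DecidableEq V] {P : Finset V} {h : ℕ} (hrange : ∀ v, 1 ≤ ℓ v ∧ ℓ v ≤ h)
    (hP : Inv G ℓ pos P) (hne : P ≠ Finset.univ) :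
    ∃ v, v ∉ P ∧ Inv G ℓ pos (insert v P) := by
  have hz : ∃ z, z ∉ P := by
    by_contra hc
    push_neg at hc
    exact hne (Finset.eq_univ_iff_forall.mpr hc)
  obtain ⟨z, hz⟩ := hz
  obtain ⟨v₀, hv₀, -⟩ := minU_exists P hz
  by_cases hbu : BlockedUp G ℓ P v₀
  · obtain ⟨v₁, hv₁, -, hbd₁⟩ := stepUp hinj hproper hplanar hP hv₀ hbu
    obtain ⟨c, hc, hcu, hcd⟩ := chaseUp hinj hproper hplanar hrange h v₁ hP hv₁ hbd₁
      (Nat.le_add_left h (ℓ v₁))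
    exact ⟨c, hc.1, good_insert hproper hP hc hcu hcd⟩
  · by_cases hbd : BlockedDown G ℓ P v₀
    · obtain ⟨v₁, hv₁, -, hbu₁⟩ := stepDown hinj hproper hplanar hP hv₀ hbd
      obtain ⟨c, hc, hcu, hcd⟩ := chaseDown hinj hproper hplanar hrange (ℓ v₁) v₁ hP hv₁ hbu₁
        (by omega)
      exact ⟨c, hc.1, good_insert hproper hP hc hcu hcd⟩
    · exact ⟨v₀, hv₀.1, good_insert hproper hP hv₀ hbu hbd⟩


include hproper in
lemma front_card [Fintype V] {P : Finset V} {h : ℕ} (hrange : ∀ v, 1 ≤ ℓ v ∧ ℓ v ≤ h)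
    (hQ : OneEnd G ℓ P) : (Front G P).card ≤ h - 1 := by
  classical
  have key := Finset.card_le_card_of_injOn (s := Front G P)
    (f := fun u => if hu : ∃ w, G.Adj u w ∧ w ∉ P then min (ℓ u) (ℓ (Classical.choose hu)) else 0)
    (t := Finset.Icc 1 (h - 1)) ?_ ?_
  · simpa [Nat.card_Icc] using key
  · intro u hu
    obtain ⟨huP, hex⟩ := (mem_Front G).mp hu
    obtain ⟨haw, hwP⟩ := Classical.choose_spec hex
    simp only [dif_pos hex, Finset.mem_coe, Finset.mem_Icc]
    have h1 := hrange u
    have h2 := hrange (Classical.choose hex)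
    rcases hproper haw with h3 | h3 <;> omega
  · intro u hu u' hu' heq
    simp only [Finset.mem_coe] at hu hu'
    obtain ⟨huP, hex⟩ := (mem_Front G).mp hu
    obtain ⟨huP', hex'⟩ := (mem_Front G).mp hu'
    obtain ⟨haw, hwP⟩ := Classical.choose_spec hex
    obtain ⟨haw', hwP'⟩ := Classical.choose_spec hex'
    simp only [dif_pos hex, dif_pos hex'] at heq
    exact hQ u _ u' _ haw huP hwP haw' huP' hwP' heq

end Lemmas



lemma inv_empty : Inv G ℓ pos (∅ : Finset V) :=
  ⟨fun _ y _ _ hy => absurd hy (Finset.notMem_empty y),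
   fun a _ _ _ _ ha _ _ _ _ _ => absurd ha (Finset.notMem_empty a)⟩

variable {h : ℕ}

open Classical in
noncomputable def chainF [Fintype V] [DecidableEq V]
    (hinj : ∀ u v, ℓ u = ℓ v → pos u = pos v → u = v)
    (hproper : ∀ ⦃u v⦄, G.Adj u v → ℓ u = ℓ v + 1 ∨ ℓ v = ℓ u + 1)
    (hplanar : ∀ a b c d, G.Adj a b → G.Adj c d →
      ℓ b = ℓ a + 1 → ℓ d = ℓ c + 1 → ℓ a = ℓ c →
      ¬((pos a < pos c ∧ pos d < pos b) ∨ (pos c < pos a ∧ pos b < pos d)))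
    (hrange : ∀ v, 1 ≤ ℓ v ∧ ℓ v ≤ h) : ℕ → Finset V
  | 0 => ∅
  | (k+1) =>
    let P := chainF hinj hproper hplanar hrange k
    if hc : Inv G ℓ pos P ∧ P ≠ Finset.univ then
      insert (Classical.choose (ext_good hinj hproper hplanar hrange hc.1 hc.2)) P
    else P

section Chain

variable [Fintype V] [DecidableEq V]
  (hinj : ∀ u v, ℓ u = ℓ v → pos u = pos v → u = v)
  (hproper : ∀ ⦃u v⦄, G.Adj u v → ℓ u = ℓ v + 1 ∨ ℓ v = ℓ u + 1)
  (hplanar : ∀ a b c d, G.Adj a b → G.Adj c d →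
      ℓ b = ℓ a + 1 → ℓ d = ℓ c + 1 → ℓ a = ℓ c →
      ¬((pos a < pos c ∧ pos d < pos b) ∨ (pos c < pos a ∧ pos b < pos d)))
  (hrange : ∀ v, 1 ≤ ℓ v ∧ ℓ v ≤ h)

lemma chainF_inv (k : ℕ) :
    Inv G ℓ pos (chainF hinj hproper hplanar hrange k) := by
  induction k with
  | zero => exact inv_empty
  | succ k ih =>
    simp only [chainF]
    split
    · next hc =>
      exact (Classical.choose_spec (ext_good hinj hproper hplanar hrange hc.1 hc.2)).2
    · exact ih

lemma chainF_succ_ne (k : ℕ)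
    (hne : chainF hinj hproper hplanar hrange k ≠ Finset.univ) :
    ∃ v, v ∉ chainF hinj hproper hplanar hrange k ∧
      chainF hinj hproper hplanar hrange (k+1) =
        insert v (chainF hinj hproper hplanar hrange k) := by
  have hk := chainF_inv hinj hproper hplanar hrange k
  refine ⟨Classical.choose (ext_good hinj hproper hplanar hrange hk hne),
    (Classical.choose_spec (ext_good hinj hproper hplanar hrange hk hne)).1, ?_⟩
  simp only [chainF]
  rw [dif_pos ⟨hk, hne⟩]

lemma chainF_succ_univ (k : ℕ)
    (hu : chainF hinj hproper hplanar hrange k = Finset.univ) :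
    chainF hinj hproper hplanar hrange (k+1) = chainF hinj hproper hplanar hrange k := by
  simp only [chainF]
  rw [dif_neg (fun hc => hc.2 hu)]

end Chain

end Stmt4Aux

/-- A planar (crossing-free) proper `h`-layer drawing, given combinatorially by a
layer assignment `ℓ : V → {1,…,h}` with `|ℓ u - ℓ v| = 1` on edges and positions
within layers such that no two edges cross, forces `pw(G) ≤ h - 1`. -/
theorem stmt4 {V : Type*} [Fintype V] [Nonempty V] (G : SimpleGraph V) (h : ℕ)
    (ℓ : V → ℕ) (pos : V → ℝ)
    (hrange : ∀ v, 1 ≤ ℓ v ∧ ℓ v ≤ h)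
    (hproper : ∀ ⦃u v⦄, G.Adj u v → ℓ u = ℓ v + 1 ∨ ℓ v = ℓ u + 1)
    (hinj : ∀ u v, ℓ u = ℓ v → pos u = pos v → u = v)
    (hplanar : ∀ a b c d, G.Adj a b → G.Adj c d →
      ℓ b = ℓ a + 1 → ℓ d = ℓ c + 1 → ℓ a = ℓ c →
      ¬((pos a < pos c ∧ pos d < pos b) ∨ (pos c < pos a ∧ pos b < pos d))) :
    pathwidth G + 1 ≤ h := by
  classical
  obtain ⟨v₀⟩ := ‹Nonempty V›
  have hh1 : 1 ≤ h := le_trans (hrange v₀).1 (hrange v₀).2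
  set n := Fintype.card V with hn
  have hnpos : 0 < n := Fintype.card_pos
  set F : ℕ → Finset V := Stmt4Aux.chainF hinj hproper hplanar hrange with hF
  have hInv : ∀ k, Stmt4Aux.Inv G ℓ pos (F k) :=
    Stmt4Aux.chainF_inv hinj hproper hplanar hrange
  have hne_step : ∀ k, F k ≠ Finset.univ →
      ∃ v, v ∉ F k ∧ F (k+1) = insert v (F k) :=
    Stmt4Aux.chainF_succ_ne hinj hproper hplanar hrange
  have huniv_step : ∀ k, F k = Finset.univ → F (k+1) = F k :=
    Stmt4Aux.chainF_succ_univ hinj hproper hplanar hrange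
  have hF0 : F 0 = ∅ := rfl
  have hsub : ∀ k, F k ⊆ F (k+1) := by
    intro k
    by_cases hu : F k = Finset.univ
    · rw [huniv_step k hu]
    · obtain ⟨v, -, he⟩ := hne_step k hu
      rw [he]; exact Finset.subset_insert _ _
  have hmono : ∀ {k l : ℕ}, k ≤ l → F k ⊆ F l := by
    intro k l hkl
    induction hkl with
    | refl => exact subset_rfl
    | step _ ih => exact ih.trans (hsub _)
  have hdiff : ∀ t, ∃ z, F (t+1) \ F t ⊆ {z} := by
    intro t
    by_cases hu : F t = Finset.univ
    · exact ⟨v₀, by rw [huniv_step t hu]; simp⟩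
    · obtain ⟨v, hv, he⟩ := hne_step t hu
      refine ⟨v, fun x hx => ?_⟩
      obtain ⟨hx1, hx2⟩ := Finset.mem_sdiff.mp hx
      rw [he] at hx1
      rcases Finset.mem_insert.mp hx1 with h1 | h1
      · simp [h1]
      · exact absurd h1 hx2
  have hcard : ∀ k, F k = Finset.univ ∨ k ≤ (F k).card := by
    intro k
    induction k with
    | zero => exact Or.inr (Nat.zero_le _)
    | succ k ih =>
      by_cases hu : F k = Finset.univ
      · left; rw [huniv_step k hu]; exact hu
      · rcases ih with h1 | h1
        · exact absurd h1 hu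
        · obtain ⟨v, hv, he⟩ := hne_step k hu
          right; rw [he, Finset.card_insert_of_notMem hv]; omega
  have hFn : F n = Finset.univ := by
    rcases hcard n with h1 | h1
    · exact h1
    · have h2 : (F n).card ≤ n := Finset.card_le_univ _
      exact Finset.eq_univ_of_card _ (le_antisymm h2 h1)
  have hall : ∀ v, v ∈ F n := fun v => hFn ▸ Finset.mem_univ v
  set m : V → ℕ := fun v => sInf {k | v ∈ F (k+1)} with hm
  have hm_mem : ∀ v, v ∈ F (m v + 1) := by
    intro v
    have hne : {k | v ∈ F (k+1)}.Nonempty := by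
      refine ⟨n - 1, ?_⟩
      show v ∈ F (n - 1 + 1)
      have he : n - 1 + 1 = n := by omega
      rw [he]; exact hall v
    exact Nat.sInf_mem hne
  have hm_le : ∀ v k, v ∈ F (k+1) → m v ≤ k := fun v k hk => Nat.sInf_le hk
  have hmemF : ∀ v k, v ∈ F k ↔ m v < k := by
    intro v k
    constructor
    · intro hv
      match k, hv with
      | 0, hv => rw [hF0] at hv; exact absurd hv (Finset.notMem_empty v)
      | (t+1), hv => exact Nat.lt_succ_of_le (hm_le v t hv)
    · intro hv
      match k, hv with
      | (t+1), hv => exact hmono (by omega : m v + 1 ≤ t + 1) (hm_mem v)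
  have hm_lt : ∀ v, m v < n := fun v => (hmemF v n).mp (hall v)
  set bag : ℕ → Finset V := fun t => (F (t+1) \ F t) ∪ Stmt4Aux.Front G (F t) with hbag
  have hbag_mem : ∀ u t, u ∈ bag t ↔
      (m u = t ∨ (m u < t ∧ ∃ w, G.Adj u w ∧ t ≤ m w)) := by
    intro u t
    rw [hbag]
    simp only [Finset.mem_union, Finset.mem_sdiff, Stmt4Aux.mem_Front, hmemF]
    constructor
    · rintro (⟨h1, h2⟩ | ⟨h1, w, hw1, hw2⟩)
      · left; omega
      · exact Or.inr ⟨h1, w, hw1, by omega⟩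
    · rintro (h1 | ⟨h1, w, hw1, hw2⟩)
      · left; constructor <;> omega
      · exact Or.inr ⟨h1, w, hw1, by omega⟩
  have hbagcard : ∀ t, (bag t).card ≤ h := by
    intro t
    have h1 : (F (t+1) \ F t).card ≤ 1 := by
      obtain ⟨z, hz⟩ := hdiff t
      calc (F (t+1) \ F t).card ≤ ({z} : Finset V).card := Finset.card_le_card hz
        _ = 1 := Finset.card_singleton z
    have h2 : (Stmt4Aux.Front G (F t)).card ≤ h - 1 :=
      Stmt4Aux.front_card hproper hrange (hInv t).2
    calc (bag t).card ≤ (F (t+1) \ F t).card + (Stmt4Aux.Front G (F t)).card :=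
          Finset.card_union_le _ _
      _ ≤ h := by omega
  have hdec : IsPathDecomp G (fun i : Fin n => bag i) := by
    refine ⟨?_, ?_, ?_⟩
    · intro v
      exact ⟨⟨m v, hm_lt v⟩, (hbag_mem v (m v)).mpr (Or.inl rfl)⟩
    · intro u v huv
      have hne : m u ≠ m v := by
        intro he
        obtain ⟨z, hz⟩ := hdiff (m u)
        have h1 : u ∈ F (m u + 1) \ F (m u) :=
          Finset.mem_sdiff.mpr ⟨hm_mem u, by rw [hmemF]; omega⟩
        have h2 : v ∈ F (m u + 1) \ F (m u) :=
          Finset.mem_sdiff.mpr ⟨by rw [he]; exact hm_mem v, by rw [hmemF]; omega⟩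
        have e1 := Finset.mem_singleton.mp (hz h1)
        have e2 := Finset.mem_singleton.mp (hz h2)
        exact G.ne_of_adj huv (e1.trans e2.symm)
      rcases Nat.lt_or_ge (m u) (m v) with hlt | hge
      · exact ⟨⟨m v, hm_lt v⟩,
          (hbag_mem u (m v)).mpr (Or.inr ⟨hlt, v, huv, le_refl _⟩),
          (hbag_mem v (m v)).mpr (Or.inl rfl)⟩
      · have hlt : m v < m u := by omega
        exact ⟨⟨m u, hm_lt u⟩,
          (hbag_mem u (m u)).mpr (Or.inl rfl),
          (hbag_mem v (m u)).mpr (Or.inr ⟨hlt, u, huv.symm, le_refl _⟩)⟩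
    · intro v i j k hij hjk hvi hvk
      have hij' : (i : ℕ) ≤ (j : ℕ) := hij
      have hjk' : (j : ℕ) ≤ (k : ℕ) := hjk
      have hvi' := (hbag_mem v i).mp hvi
      have hvk' := (hbag_mem v k).mp hvk
      apply (hbag_mem v j).mpr
      have hvle : m v ≤ (j : ℕ) := by rcases hvi' with h1 | ⟨h1, -⟩ <;> omega
      by_cases hj : m v = (j : ℕ)
      · exact Or.inl hj
      · have hmvj : m v < (j : ℕ) := by omega
        rcases hvk' with h2 | ⟨h2, w, hw1, hw2⟩
        · omega
        · exact Or.inr ⟨hmvj, w, hw1, by omega⟩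
  have hmem : (h - 1) ∈ {w | ∃ (n : ℕ) (B : Fin n → Finset V),
      IsPathDecomp G B ∧ ∀ i, (B i).card ≤ w + 1} := by
    refine ⟨n, fun i : Fin n => bag i, hdec, fun i => ?_⟩
    show (bag (i : ℕ)).card ≤ h - 1 + 1
    have := hbagcard (i : ℕ)
    omega
  have hpw : pathwidth G ≤ h - 1 := Nat.sInf_le hmem
  omega
end

section
/- Let T be a tree and T' the tree obtained from T by deleting all leaves. If T' is a subgraph of a stegosaurus without stumps, then every vertex of T' has degree at most 4 in T'. -/
open SimpleGraph

private lemma tree_unique_mid13 {V : Type*} {G : SimpleGraph V} (T : G.Subgraph)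
    (hTree : T.coe.IsTree) {a b w1 w2 : V} (hab : a ≠ b)
    (h1 : T.Adj a w1) (h1' : T.Adj w1 b) (h2 : T.Adj a w2) (h2' : T.Adj w2 b) :
    w1 = w2 := by
  have hA : a ∈ T.verts := h1.fst_mem
  have hB : b ∈ T.verts := h1'.snd_mem
  have hW1 : w1 ∈ T.verts := h1.snd_mem
  have hW2 : w2 ∈ T.verts := h2.snd_mem
  set A : T.verts := ⟨a, hA⟩
  set B : T.verts := ⟨b, hB⟩
  set W1 : T.verts := ⟨w1, hW1⟩
  set W2 : T.verts := ⟨w2, hW2⟩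
  have e1 : T.coe.Adj A W1 := h1
  have e1' : T.coe.Adj W1 B := h1'
  have e2 : T.coe.Adj A W2 := h2
  have e2' : T.coe.Adj W2 B := h2'
  have hABne : A ≠ B := fun h => hab (congrArg Subtype.val h)
  have hP1 : (Walk.cons e1 (Walk.cons e1' Walk.nil)).IsPath := by
    simp [Walk.isPath_def, List.nodup_cons]
    exact ⟨⟨e1.ne, hABne⟩, e1'.ne⟩
  have hP2 : (Walk.cons e2 (Walk.cons e2' Walk.nil)).IsPath := by
    simp [Walk.isPath_def, List.nodup_cons]
    exact ⟨⟨e2.ne, hABne⟩, e2'.ne⟩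
  have hpq := (isAcyclic_iff_path_unique.mp hTree.IsAcyclic)
    ⟨Walk.cons e1 (Walk.cons e1' Walk.nil), hP1⟩
    ⟨Walk.cons e2 (Walk.cons e2' Walk.nil), hP2⟩
  have hw := congrArg (fun r : T.coe.Path A B => (r : T.coe.Walk A B).support) hpq
  simp [Walk.support_cons] at hw
  exact congrArg Subtype.val hw

private lemma both_mem13 {V : Type*} {s : Set V} {a b : V} (hsub : s ⊆ {a, b})
    (h2 : 2 ≤ s.ncard) : a ∈ s ∧ b ∈ s := by
  have hfin : s.Finite := Set.Finite.subset (Set.toFinite _) hsub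
  constructor
  · by_contra ha
    have : s ⊆ {b} := by
      intro x hx
      rcases hsub hx with h | h
      · exact absurd (h ▸ hx) ha
      · exact h
    have := Set.ncard_le_ncard this (Set.toFinite _)
    simp [Set.ncard_singleton] at this
    omega
  · by_contra hb
    have : s ⊆ {a} := by
      intro x hx
      rcases hsub hx with h | h
      · exact h
      · exact absurd (h ▸ hx) hb
    have := Set.ncard_le_ncard this (Set.toFinite _)
    simp [Set.ncard_singleton] at this
    omega

/-- Let `G` be a stegosaurus without stumps: a chain of complete bipartite
blocks `K_{2,h_j}` (`j < m`), the `j`-th having 2-side `{p j, q j}` and large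
side `S j` with `h_j = |S j| ≥ 2`, where all edges of `G` are the block edges,
consecutive blocks are glued either along an edge (inside a snake) or at a
single mergeable large-side vertex (where two snakes merge), and non-consecutive
blocks are disjoint. If `T` is a tree subgraph of `G` and `T'` is obtained from
`T` by deleting all its leaves, then every vertex of `T'` has degree at most 4
in `T'`. -/
theorem stmt13 {V : Type*} [Fintype V] [DecidableEq V] (G : SimpleGraph V)
    (m : ℕ) (p q : Fin m → V) (S : Fin m → Finset V)
    (blk : Fin m → Finset V)
    (hblk : ∀ j, blk j = insert (p j) (insert (q j) (S j)))
    (hK : ∀ j, p j ≠ q j ∧ p j ∉ S j ∧ q j ∉ S j ∧ 2 ≤ (S j).card)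
    (hadj : ∀ u v, G.Adj u v ↔ ∃ j,
      ((u = p j ∨ u = q j) ∧ v ∈ S j) ∨ ((v = p j ∨ v = q j) ∧ u ∈ S j))
    (hfar : ∀ i j : Fin m, (i : ℕ) + 2 ≤ (j : ℕ) → blk i ∩ blk j = ∅)
    (hglue : ∀ (j : ℕ) (hj : j + 1 < m),
      (q ⟨j, Nat.lt_of_succ_lt hj⟩ ∈ S ⟨j + 1, hj⟩ ∧
        p ⟨j + 1, hj⟩ ∈ S ⟨j, Nat.lt_of_succ_lt hj⟩ ∧
        blk ⟨j, Nat.lt_of_succ_lt hj⟩ ∩ blk ⟨j + 1, hj⟩ =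
          {q ⟨j, Nat.lt_of_succ_lt hj⟩, p ⟨j + 1, hj⟩})
      ∨ (∃ x, x ∈ S ⟨j, Nat.lt_of_succ_lt hj⟩ ∧ x ∈ S ⟨j + 1, hj⟩ ∧
          blk ⟨j, Nat.lt_of_succ_lt hj⟩ ∩ blk ⟨j + 1, hj⟩ = {x}))
    (T : G.Subgraph) (hTree : T.coe.IsTree)
    (T' : G.Subgraph)
    (hT'verts : T'.verts = {v ∈ T.verts | 2 ≤ (T.neighborSet v).ncard})
    (hT'adj : ∀ a b, T'.Adj a b ↔ T.Adj a b ∧ a ∈ T'.verts ∧ b ∈ T'.verts) :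
    ∀ v ∈ T'.verts, (T'.neighborSet v).ncard ≤ 4 := by
  classical
  -- membership in blocks
  have hmem : ∀ (j : Fin m) (x : V), x ∈ blk j ↔ (x = p j ∨ x = q j ∨ x ∈ S j) := by
    intro j x
    rw [hblk]
    simp [Finset.mem_insert]
  -- blocks containing a common vertex are equal or consecutive
  have hclose : ∀ (i j : Fin m) (x : V), x ∈ blk i → x ∈ blk j → i ≠ j →
      ((i : ℕ) + 1 = (j : ℕ) ∨ (j : ℕ) + 1 = (i : ℕ)) := by
    intro i j x hxi hxj hne
    by_contra hcon
    push_neg at hcon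
    have hvne : (i : ℕ) ≠ (j : ℕ) := fun h => hne (Fin.ext h)
    rcases Nat.lt_or_ge (i : ℕ) (j : ℕ) with h | h
    · have := hfar i j (by omega)
      have hx : x ∈ blk i ∩ blk j := Finset.mem_inter.mpr ⟨hxi, hxj⟩
      rw [this] at hx
      exact absurd hx (Finset.notMem_empty x)
    · have := hfar j i (by omega)
      have hx : x ∈ blk j ∩ blk i := Finset.mem_inter.mpr ⟨hxj, hxi⟩
      rw [this] at hx
      exact absurd hx (Finset.notMem_empty x)
  intro v hv
  -- the glue vertex on the left side of a block
  have hLeft : ∀ (j : Fin m), ∃ g : V, ∀ (i : Fin m) (w : V),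
      (i : ℕ) + 1 = (j : ℕ) → w ∈ blk i → w ∈ S j → w = g := by
    intro j
    by_cases hj : ∃ i : Fin m, (i : ℕ) + 1 = (j : ℕ)
    · obtain ⟨i₀, hi₀⟩ := hj
      have hm : (i₀ : ℕ) + 1 < m := hi₀ ▸ j.isLt
      have e1 : (⟨(i₀ : ℕ), Nat.lt_of_succ_lt hm⟩ : Fin m) = i₀ := Fin.ext rfl
      have e2 : (⟨(i₀ : ℕ) + 1, hm⟩ : Fin m) = j := Fin.ext hi₀
      have hg := hglue (i₀ : ℕ) hm
      rw [e1, e2] at hg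
      rcases hg with ⟨hq, hp, hint⟩ | ⟨x, hx1, hx2, hint⟩
      · refine ⟨q i₀, fun i w hi hwb hwS => ?_⟩
        have hii : i = i₀ := Fin.ext (by omega)
        subst hii
        have hw : w ∈ blk i ∩ blk j :=
          Finset.mem_inter.mpr ⟨hwb, (hmem j w).mpr (Or.inr (Or.inr hwS))⟩
        rw [hint] at hw
        rcases Finset.mem_insert.mp hw with h | h
        · exact h
        · exact absurd ((Finset.mem_singleton.mp h) ▸ hwS) (hK j).2.1
      · refine ⟨x, fun i w hi hwb hwS => ?_⟩
        have hii : i = i₀ := Fin.ext (by omega)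
        subst hii
        have hw : w ∈ blk i ∩ blk j :=
          Finset.mem_inter.mpr ⟨hwb, (hmem j w).mpr (Or.inr (Or.inr hwS))⟩
        rw [hint] at hw
        exact Finset.mem_singleton.mp hw
    · exact ⟨v, fun i w hi _ _ => absurd ⟨i, hi⟩ hj⟩
  -- the glue vertex on the right side of a block
  have hRight : ∀ (j : Fin m), ∃ g : V, ∀ (i : Fin m) (w : V),
      (j : ℕ) + 1 = (i : ℕ) → w ∈ blk i → w ∈ S j → w = g := by
    intro j
    by_cases hj : ∃ i : Fin m, (j : ℕ) + 1 = (i : ℕ)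
    · obtain ⟨i₀, hi₀⟩ := hj
      have hm : (j : ℕ) + 1 < m := hi₀ ▸ i₀.isLt
      have e1 : (⟨(j : ℕ), Nat.lt_of_succ_lt hm⟩ : Fin m) = j := Fin.ext rfl
      have e2 : (⟨(j : ℕ) + 1, hm⟩ : Fin m) = i₀ := Fin.ext hi₀
      have hg := hglue (j : ℕ) hm
      rw [e1, e2] at hg
      rcases hg with ⟨hq, hp, hint⟩ | ⟨x, hx1, hx2, hint⟩
      · refine ⟨p i₀, fun i w hi hwb hwS => ?_⟩
        have hii : i = i₀ := Fin.ext (by omega)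
        subst hii
        have hw : w ∈ blk j ∩ blk i :=
          Finset.mem_inter.mpr ⟨(hmem j w).mpr (Or.inr (Or.inr hwS)), hwb⟩
        rw [hint] at hw
        rcases Finset.mem_insert.mp hw with h | h
        · exact absurd (h ▸ hwS) (hK j).2.2.1
        · exact Finset.mem_singleton.mp h
      · refine ⟨x, fun i w hi hwb hwS => ?_⟩
        have hii : i = i₀ := Fin.ext (by omega)
        subst hii
        have hw : w ∈ blk j ∩ blk i :=
          Finset.mem_inter.mpr ⟨(hmem j w).mpr (Or.inr (Or.inr hwS)), hwb⟩
        rw [hint] at hw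
        exact Finset.mem_singleton.mp hw
    · exact ⟨v, fun i w hi _ _ => absurd ⟨i, hi⟩ hj⟩
  -- basic facts about neighbors of v in T'
  have hNB : ∀ w, w ∈ T'.neighborSet v → T.Adj v w ∧ w ∈ T'.verts := by
    intro w hw
    have := (hT'adj v w).mp hw
    exact ⟨this.1, this.2.2⟩
  have hGadj : ∀ w, w ∈ T'.neighborSet v → G.Adj v w :=
    fun w hw => T.adj_sub (hNB w hw).1
  rcases Set.eq_empty_or_nonempty (T'.neighborSet v) with hN | ⟨w₀, hw₀⟩
  · simp [hN]
  obtain ⟨j₀, hj₀⟩ := (hadj v w₀).mp (hGadj w₀ hw₀)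
  have hvj₀ : v ∈ blk j₀ := by
    rcases hj₀ with ⟨hv', _⟩ | ⟨_, hv'⟩
    · exact (hmem j₀ v).mpr (hv'.imp id Or.inl)
    · exact (hmem j₀ v).mpr (Or.inr (Or.inr hv'))
  have hcard4 : ∀ a b c d : V, ({a, b, c, d} : Set V).ncard ≤ 4 := by
    intro a b c d
    have h1 := Set.ncard_insert_le a ({b, c, d} : Set V)
    have h2 := Set.ncard_insert_le b ({c, d} : Set V)
    have h3 := Set.ncard_insert_le c ({d} : Set V)
    have h4 : ({d} : Set V).ncard = 1 := Set.ncard_singleton d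
    omega
  by_cases hP : ∃ j : Fin m, v = p j ∨ v = q j
  · -- v is a 2-side vertex of a unique block js
    obtain ⟨js, hvs⟩ := hP
    have hvjs : v ∈ blk js := (hmem js v).mpr (hvs.imp id Or.inl)
    have hU : ∀ i : Fin m, (v = p i ∨ v = q i) → i = js := by
      intro i hvi
      by_contra hne
      have hvi' : v ∈ blk i := (hmem i v).mpr (hvi.imp id Or.inl)
      rcases hclose i js v hvi' hvjs hne with hc | hc
      · -- interface (i, js)
        have hm' : (i : ℕ) + 1 < m := hc ▸ js.isLt
        have e1 : (⟨(i : ℕ), Nat.lt_of_succ_lt hm'⟩ : Fin m) = i := Fin.ext rfl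
        have e2 : (⟨(i : ℕ) + 1, hm'⟩ : Fin m) = js := Fin.ext hc
        have hg := hglue (i : ℕ) hm'
        rw [e1, e2] at hg
        have hvv : v ∈ blk i ∩ blk js := Finset.mem_inter.mpr ⟨hvi', hvjs⟩
        rcases hg with ⟨hq2, hp2, hint⟩ | ⟨x, hx1, hx2, hint⟩
        · rw [hint] at hvv
          rcases Finset.mem_insert.mp hvv with h | h
          · rcases hvs with h2 | h2
            · exact (hK js).2.1 (by rw [← h2, h]; exact hq2)
            · exact (hK js).2.2.1 (by rw [← h2, h]; exact hq2)
          · rw [Finset.mem_singleton] at h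
            rcases hvi with h2 | h2
            · exact (hK i).2.1 (by rw [← h2, h]; exact hp2)
            · exact (hK i).2.2.1 (by rw [← h2, h]; exact hp2)
        · rw [hint, Finset.mem_singleton] at hvv
          rcases hvi with h2 | h2
          · exact (hK i).2.1 (by rw [← h2, hvv]; exact hx1)
          · exact (hK i).2.2.1 (by rw [← h2, hvv]; exact hx1)
      · -- interface (js, i)
        have hm' : (js : ℕ) + 1 < m := hc ▸ i.isLt
        have e1 : (⟨(js : ℕ), Nat.lt_of_succ_lt hm'⟩ : Fin m) = js := Fin.ext rfl
        have e2 : (⟨(js : ℕ) + 1, hm'⟩ : Fin m) = i := Fin.ext hc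
        have hg := hglue (js : ℕ) hm'
        rw [e1, e2] at hg
        have hvv : v ∈ blk js ∩ blk i := Finset.mem_inter.mpr ⟨hvjs, hvi'⟩
        rcases hg with ⟨hq2, hp2, hint⟩ | ⟨x, hx1, hx2, hint⟩
        · rw [hint] at hvv
          rcases Finset.mem_insert.mp hvv with h | h
          · rcases hvi with h2 | h2
            · exact (hK i).2.1 (by rw [← h2, h]; exact hq2)
            · exact (hK i).2.2.1 (by rw [← h2, h]; exact hq2)
          · rw [Finset.mem_singleton] at h
            rcases hvs with h2 | h2
            · exact (hK js).2.1 (by rw [← h2, h]; exact hp2)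
            · exact (hK js).2.2.1 (by rw [← h2, h]; exact hp2)
        · rw [hint, Finset.mem_singleton] at hvv
          rcases hvs with h2 | h2
          · exact absurd (show p js ∈ S js by rw [← h2, hvv]; exact hx1) (hK js).2.1
          · exact absurd (show q js ∈ S js by rw [← h2, hvv]; exact hx1) (hK js).2.2.1
    obtain ⟨gL, hgL⟩ := hLeft js
    obtain ⟨gR, hgR⟩ := hRight js
    set Wset : Set V := {w | w ∈ T'.neighborSet v ∧ w ∈ S js ∧
      ∀ i : Fin m, w ∈ blk i → i = js} with hWset
    have hWsub : Wset.Subsingleton := by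
      have key : ∀ w, w ∈ Wset → T.Adj w (p js) ∧ T.Adj w (q js) := by
        intro w hw
        obtain ⟨hwN, hwS, hwInt⟩ := hw
        have hw' : w ∈ T'.verts := (hNB w hwN).2
        rw [hT'verts] at hw'
        have hdeg : 2 ≤ (T.neighborSet w).ncard := hw'.2
        have hsub2 : T.neighborSet w ⊆ {p js, q js} := by
          intro u hu
          obtain ⟨i, hcase⟩ := (hadj w u).mp (T.adj_sub hu)
          rcases hcase with ⟨hw2, huS⟩ | ⟨hu2, hwS2⟩
          · have hij : i = js := hwInt i ((hmem i w).mpr (hw2.imp id Or.inl))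
            subst hij
            rcases hw2 with h | h
            · rw [h] at hwS; exact absurd hwS (hK i).2.1
            · rw [h] at hwS; exact absurd hwS (hK i).2.2.1
          · have hij : i = js := hwInt i ((hmem i w).mpr (Or.inr (Or.inr hwS2)))
            subst hij
            rcases hu2 with h | h
            · exact Or.inl h
            · exact Or.inr h
        exact both_mem13 hsub2 hdeg
      intro w1 h1 w2 h2
      obtain ⟨h1p, h1q⟩ := key w1 h1
      obtain ⟨h2p, h2q⟩ := key w2 h2
      exact tree_unique_mid13 T hTree (hK js).1 h1p.symm h1q h2p.symm h2q
    have hcount : ∀ a b c : V,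
        T'.neighborSet v ⊆ insert a (insert b (insert c Wset)) →
        (T'.neighborSet v).ncard ≤ 4 := by
      intro a b c hsub
      have h0 : Wset.ncard ≤ 1 := by
        rcases hWsub.eq_empty_or_singleton with h | ⟨x, h⟩ <;> simp [h]
      have h1 := Set.ncard_insert_le c Wset
      have h2 := Set.ncard_insert_le b (insert c Wset)
      have h3 := Set.ncard_insert_le a (insert b (insert c Wset))
      have h4 := Set.ncard_le_ncard hsub (Set.toFinite _)
      omega
    -- classification of neighbors lying in S js
    have hSjs : ∀ w, w ∈ T'.neighborSet v → w ∈ S js →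
        (w ∈ Wset ∨ (∃ i' : Fin m, (i' : ℕ) + 1 = (js : ℕ) ∧ w ∈ blk i' ∧ w = gL)
          ∨ ∃ i' : Fin m, (js : ℕ) + 1 = (i' : ℕ) ∧ w ∈ blk i' ∧ w = gR) := by
      intro w hw hwS
      by_cases hInt : ∀ i : Fin m, w ∈ blk i → i = js
      · exact Or.inl ⟨hw, hwS, hInt⟩
      · push_neg at hInt
        obtain ⟨i', hwi', hne'⟩ := hInt
        have hwjs : w ∈ blk js := (hmem js w).mpr (Or.inr (Or.inr hwS))
        rcases hclose i' js w hwi' hwjs hne' with hc | hc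
        · exact Or.inr (Or.inl ⟨i', hc, hwi', hgL i' w hc hwi' hwS⟩)
        · exact Or.inr (Or.inr ⟨i', hc, hwi', hgR i' w hc hwi' hwS⟩)
    by_cases hVS : ∃ i : Fin m, i ≠ js ∧ v ∈ blk i
    · -- v also belongs to a neighboring block i₂
      obtain ⟨i₂, hne₂, hvi₂⟩ := hVS
      have hvSi₂ : v ∈ S i₂ := by
        rcases (hmem i₂ v).mp hvi₂ with h | h | h
        · exact absurd (hU i₂ (Or.inl h)) hne₂
        · exact absurd (hU i₂ (Or.inr h)) hne₂
        · exact h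
      rcases hclose i₂ js v hvi₂ hvjs hne₂ with hc | hc
      · -- i₂ + 1 = js : v sits in the block to the left of js
        have hm' : (i₂ : ℕ) + 1 < m := hc ▸ js.isLt
        have e1 : (⟨(i₂ : ℕ), Nat.lt_of_succ_lt hm'⟩ : Fin m) = i₂ := Fin.ext rfl
        have e2 : (⟨(i₂ : ℕ) + 1, hm'⟩ : Fin m) = js := Fin.ext hc
        have hg := hglue (i₂ : ℕ) hm'
        rw [e1, e2] at hg
        rcases hg with ⟨hq2, hp2, hint⟩ | ⟨x, hx1, hx2, hint⟩
        · -- edge glue; the left glue vertex of js is q i₂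
          have hgLval : q i₂ = gL :=
            hgL i₂ (q i₂) hc ((hmem i₂ (q i₂)).mpr (Or.inr (Or.inl rfl))) hq2
          apply hcount (p i₂) (q i₂) gR
          intro w hw
          obtain ⟨i, hcase⟩ := (hadj v w).mp (hGadj w hw)
          rcases hcase with ⟨hv', hwS⟩ | ⟨hw', hvS⟩
          · have hij : i = js := hU i hv'
            subst hij
            rcases hSjs w hw hwS with hW | ⟨i', hc', hwi', hwg⟩ | ⟨i', hc', hwi', hwg⟩
            · exact Set.mem_insert_iff.mpr (Or.inr (Set.mem_insert_iff.mpr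
                (Or.inr (Set.mem_insert_iff.mpr (Or.inr hW)))))
            · -- w = gL = q i₂
              have hwq : w = q i₂ := by rw [hwg, ← hgLval]
              exact Set.mem_insert_iff.mpr (Or.inr (Set.mem_insert_iff.mpr (Or.inl hwq)))
            · exact Set.mem_insert_iff.mpr (Or.inr (Set.mem_insert_iff.mpr
                (Or.inr (Set.mem_insert_iff.mpr (Or.inl hwg)))))
          · -- edge via a block i with v ∈ S i; then i = i₂
            have hvi : v ∈ blk i := (hmem i v).mpr (Or.inr (Or.inr hvS))
            have hij : i = i₂ := by
              by_contra hne
              by_cases hijs : i = js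
              · subst hijs
                rcases hvs with h2 | h2
                · exact (hK i).2.1 (by rw [← h2]; exact hvS)
                · exact absurd (h2 ▸ hvS) (hK i).2.2.1
              · rcases hclose i js v hvi hvjs hijs with hc2 | hc2
                · exact hne (Fin.ext (by omega))
                · -- js + 1 = i, so blk i₂ ∩ blk i = ∅
                  have := hfar i₂ i (by omega)
                  have hx : v ∈ blk i₂ ∩ blk i := Finset.mem_inter.mpr ⟨hvi₂, hvi⟩
                  rw [this] at hx
                  exact absurd hx (Finset.notMem_empty v)
            subst hij
            rcases hw' with h | h
            · exact Set.mem_insert_iff.mpr (Or.inl h)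
            · exact Set.mem_insert_iff.mpr (Or.inr (Set.mem_insert_iff.mpr (Or.inl h)))
        · -- vertex glue: v = x ∈ S js, impossible
          have hvv : v ∈ blk i₂ ∩ blk js := Finset.mem_inter.mpr ⟨hvi₂, hvjs⟩
          rw [hint, Finset.mem_singleton] at hvv
          rcases hvs with h2 | h2
          · exact absurd (show p js ∈ S js by rw [← h2, hvv]; exact hx2) (hK js).2.1
          · exact absurd (show q js ∈ S js by rw [← h2, hvv]; exact hx2) (hK js).2.2.1
      · -- js + 1 = i₂ : v sits in the block to the right of js
        have hm' : (js : ℕ) + 1 < m := hc ▸ i₂.isLt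
        have e1 : (⟨(js : ℕ), Nat.lt_of_succ_lt hm'⟩ : Fin m) = js := Fin.ext rfl
        have e2 : (⟨(js : ℕ) + 1, hm'⟩ : Fin m) = i₂ := Fin.ext hc
        have hg := hglue (js : ℕ) hm'
        rw [e1, e2] at hg
        rcases hg with ⟨hq2, hp2, hint⟩ | ⟨x, hx1, hx2, hint⟩
        · have hgRval : p i₂ = gR :=
            hgR i₂ (p i₂) hc ((hmem i₂ (p i₂)).mpr (Or.inl rfl)) hp2
          apply hcount (p i₂) (q i₂) gL
          intro w hw
          obtain ⟨i, hcase⟩ := (hadj v w).mp (hGadj w hw)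
          rcases hcase with ⟨hv', hwS⟩ | ⟨hw', hvS⟩
          · have hij : i = js := hU i hv'
            subst hij
            rcases hSjs w hw hwS with hW | ⟨i', hc', hwi', hwg⟩ | ⟨i', hc', hwi', hwg⟩
            · exact Set.mem_insert_iff.mpr (Or.inr (Set.mem_insert_iff.mpr
                (Or.inr (Set.mem_insert_iff.mpr (Or.inr hW)))))
            · exact Set.mem_insert_iff.mpr (Or.inr (Set.mem_insert_iff.mpr
                (Or.inr (Set.mem_insert_iff.mpr (Or.inl hwg)))))
            · have hwp : w = p i₂ := by rw [hwg, ← hgRval]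
              exact Set.mem_insert_iff.mpr (Or.inl hwp)
          · have hvi : v ∈ blk i := (hmem i v).mpr (Or.inr (Or.inr hvS))
            have hij : i = i₂ := by
              by_contra hne
              by_cases hijs : i = js
              · subst hijs
                rcases hvs with h2 | h2
                · exact absurd (h2 ▸ hvS) (hK i).2.1
                · exact absurd (h2 ▸ hvS) (hK i).2.2.1
              · rcases hclose i js v hvi hvjs hijs with hc2 | hc2
                · -- i + 1 = js, so blk i ∩ blk i₂ = ∅
                  have := hfar i i₂ (by omega)
                  have hx : v ∈ blk i ∩ blk i₂ := Finset.mem_inter.mpr ⟨hvi, hvi₂⟩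
                  rw [this] at hx
                  exact absurd hx (Finset.notMem_empty v)
                · exact hne (Fin.ext (by omega))
            subst hij
            rcases hw' with h | h
            · exact Set.mem_insert_iff.mpr (Or.inl h)
            · exact Set.mem_insert_iff.mpr (Or.inr (Set.mem_insert_iff.mpr (Or.inl h)))
        · have hvv : v ∈ blk js ∩ blk i₂ := Finset.mem_inter.mpr ⟨hvjs, hvi₂⟩
          rw [hint, Finset.mem_singleton] at hvv
          rcases hvs with h2 | h2
          · exact absurd (show p js ∈ S js by rw [← h2, hvv]; exact hx1) (hK js).2.1
          · exact absurd (show q js ∈ S js by rw [← h2, hvv]; exact hx1) (hK js).2.2.1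
    · -- v belongs only to blk js
      push_neg at hVS
      apply hcount gL gR gR
      intro w hw
      obtain ⟨i, hcase⟩ := (hadj v w).mp (hGadj w hw)
      rcases hcase with ⟨hv', hwS⟩ | ⟨hw', hvS⟩
      · have hij : i = js := hU i hv'
        subst hij
        rcases hSjs w hw hwS with hW | ⟨i', hc', hwi', hwg⟩ | ⟨i', hc', hwi', hwg⟩
        · exact Set.mem_insert_iff.mpr (Or.inr (Set.mem_insert_iff.mpr
            (Or.inr (Set.mem_insert_iff.mpr (Or.inr hW)))))
        · exact Set.mem_insert_iff.mpr (Or.inl hwg)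
        · exact Set.mem_insert_iff.mpr (Or.inr (Set.mem_insert_iff.mpr (Or.inl hwg)))
      · have hvi : v ∈ blk i := (hmem i v).mpr (Or.inr (Or.inr hvS))
        by_cases hijs : i = js
        · subst hijs
          rcases hvs with h2 | h2
          · exact absurd (h2 ▸ hvS) (hK i).2.1
          · exact absurd (h2 ▸ hvS) (hK i).2.2.1
        · exact absurd hvi (hVS i hijs)
  · -- v is never a 2-side vertex
    push_neg at hP
    set Jv : Finset (Fin m) := Finset.univ.filter (fun i => v ∈ blk i) with hJv
    have hJne : Jv.Nonempty :=
      ⟨j₀, Finset.mem_filter.mpr ⟨Finset.mem_univ _, hvj₀⟩⟩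
    set i₁ := Jv.min' hJne with hi₁def
    set i₂ := Jv.max' hJne with hi₂def
    have hi₁ : v ∈ blk i₁ := (Finset.mem_filter.mp (Jv.min'_mem hJne)).2
    have hi₂ : v ∈ blk i₂ := (Finset.mem_filter.mp (Jv.max'_mem hJne)).2
    have hle : (i₁ : ℕ) ≤ (i₂ : ℕ) := Fin.le_def.mp (Jv.min'_le i₂ (Jv.max'_mem hJne))
    have hnear : (i₂ : ℕ) ≤ (i₁ : ℕ) + 1 := by
      by_cases h : i₁ = i₂
      · rw [h]; omega
      · rcases hclose i₁ i₂ v hi₁ hi₂ h with hc | hc <;> omega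
    have hsub : T'.neighborSet v ⊆ {p i₁, q i₁, p i₂, q i₂} := by
      intro w hw
      obtain ⟨i, hcase⟩ := (hadj v w).mp (hGadj w hw)
      rcases hcase with ⟨hv', _⟩ | ⟨hw', hvS⟩
      · rcases hv' with h | h
        · exact absurd h (hP i).1
        · exact absurd h (hP i).2
      · have hvi : v ∈ blk i := (hmem i v).mpr (Or.inr (Or.inr hvS))
        have hiJ : i ∈ Jv := Finset.mem_filter.mpr ⟨Finset.mem_univ _, hvi⟩
        have h1 : (i₁ : ℕ) ≤ (i : ℕ) := Fin.le_def.mp (Jv.min'_le i hiJ)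
        have h2 : (i : ℕ) ≤ (i₂ : ℕ) := Fin.le_def.mp (Jv.le_max' i hiJ)
        have : i = i₁ ∨ i = i₂ := by
          rcases Nat.eq_or_lt_of_le h1 with h | h
          · exact Or.inl (Fin.ext h.symm)
          · exact Or.inr (Fin.ext (by omega))
        simp only [Set.mem_insert_iff, Set.mem_singleton_iff]
        rcases this with rfl | rfl
        · rcases hw' with h | h
          · exact Or.inl h
          · exact Or.inr (Or.inl h)
        · rcases hw' with h | h
          · exact Or.inr (Or.inr (Or.inl h))
          · exact Or.inr (Or.inr (Or.inr h))
    exact le_trans (Set.ncard_le_ncard hsub (Set.toFinite _)) (hcard4 _ _ _ _)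
end

section
/- A graph admitting a crossing-free proper 2-layer drawing is a forest: if G = (A ∪ B, E) is bipartite and there exist linear orders <₁ on A and <₂ on B such that no two edges cross (edges (a,b),(c,d) cross iff a <₁ c and d <₂ b, or c <₁ a and b <₂ d), then G contains no cycle. -/
open SimpleGraph Walk

lemma mem_support_iff_mem_tail {V : Type*} {G : SimpleGraph V} {s z : V} {c : G.Walk s s}
    (hc : ¬ c.Nil) : z ∈ c.support ↔ z ∈ c.support.tail := by
  obtain ⟨u, h, r, rfl⟩ := not_nil_iff.mp hc
  simp only [support_cons, List.tail_cons, List.mem_cons]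
  exact ⟨fun hz => hz.elim (fun h => h ▸ r.end_mem_support) id, Or.inr⟩

/-- In a cycle, every vertex of the support has two distinct neighbors lying in the support. -/
lemma two_neighbors_of_isCycle {V : Type*} {G : SimpleGraph V} {w : V} {p : G.Walk w w}
    (hp : p.IsCycle) {u : V} (hu : u ∈ p.support) :
    ∃ x y, x ≠ y ∧ G.Adj u x ∧ G.Adj u y ∧ x ∈ p.support ∧ y ∈ p.support := by
  classical
  set q := p.rotate u hu with hqdef
  have hq : q.IsCycle := hp.rotate hu
  have hpnn : ¬ p.Nil := by
    rw [not_nil_iff_lt_length]; have := hp.three_le_length; omega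
  have hqnn : ¬ q.Nil := by
    rw [not_nil_iff_lt_length]; have := hq.three_le_length; omega
  have hsup : ∀ z, z ∈ q.support ↔ z ∈ p.support := by
    intro z
    rw [mem_support_iff_mem_tail hqnn, mem_support_iff_mem_tail hpnn]
    exact (p.support_rotate u hu).perm.mem_iff
  obtain ⟨x, h, r, hqc⟩ := not_nil_iff.mp hqnn
  rw [hqc] at hq
  obtain ⟨hr, he⟩ := (cons_isCycle_iff r h).mp hq
  have hrlen : 2 ≤ r.length := by
    have := hq.three_le_length
    simp only [length_cons] at this
    omega
  have hnn : ¬ r.reverse.Nil := by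
    rw [not_nil_iff_lt_length, length_reverse]
    omega
  obtain ⟨y, h2, r2, hr2⟩ := not_nil_iff.mp hnn
  have hy_edge : s(u, y) ∈ r.edges := by
    have : s(u, y) ∈ r.reverse.edges := by rw [hr2]; simp
    rwa [edges_reverse, List.mem_reverse] at this
  refine ⟨x, y, ?_, h, h2, ?_, ?_⟩
  · rintro rfl; exact he hy_edge
  · rw [← hsup, hqc]
    simp [r.start_mem_support]
  · rw [← hsup, hqc]
    have : y ∈ r.reverse.support := by rw [hr2]; simp
    rw [support_reverse, List.mem_reverse] at this
    simp [this]

/-- A graph admitting a crossing-free proper 2-layer drawing is a forest: if `G`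
is bipartite with parts `A`, `B` (all edges crossing the parts, given by the
relation `E`), and there are linear orders on `A` and on `B` (given by
injections `f`, `g` into `ℝ`) under which no two independent edges cross, then
`G` is acyclic. -/
theorem stmt16 {A B : Type*} (E : A → B → Prop) (G : SimpleGraph (A ⊕ B))
    (hG : ∀ u v, G.Adj u v ↔
      (∃ a b, u = Sum.inl a ∧ v = Sum.inr b ∧ E a b) ∨
      (∃ a b, u = Sum.inr b ∧ v = Sum.inl a ∧ E a b))
    (f : A → ℝ) (g : B → ℝ)
    (hf : Function.Injective f) (hg : Function.Injective g)
    (hcf : ∀ a c b d, E a b → E c d → a ≠ c → b ≠ d →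
      ¬((f a < f c ∧ g d < g b) ∨ (f c < f a ∧ g b < g d))) :
    G.IsAcyclic := by
  classical
  intro v p hp
  -- adjacency facts
  have adj_inl : ∀ (a : A) (z : A ⊕ B), G.Adj (Sum.inl a) z → ∃ b, z = Sum.inr b ∧ E a b := by
    intro a z hz
    rcases (hG _ _).mp hz with ⟨a', b', ha, hb, hE⟩ | ⟨a', b', ha, hb, hE⟩
    · exact ⟨b', hb, by cases ha; exact hE⟩
    · cases ha
  have adj_inr : ∀ (b : B) (z : A ⊕ B), G.Adj (Sum.inr b) z → ∃ a, z = Sum.inl a ∧ E a b := by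
    intro b z hz
    rcases (hG _ _).mp hz with ⟨a', b', ha, hb, hE⟩ | ⟨a', b', hb, ha, hE⟩
    · cases ha
    · exact ⟨a', ha, by cases hb; exact hE⟩
  -- the set of left vertices in the support is nonempty
  have hA : ∃ a : A, Sum.inl a ∈ p.support := by
    obtain ⟨x, y, _, hx, _, hxs, _⟩ := two_neighbors_of_isCycle hp p.start_mem_support
    rcases x with a | b
    · exact ⟨a, hxs⟩
    · rcases (hG v (Sum.inr b)).mp hx with ⟨a, b', ha, _, _⟩ | ⟨a, b', ha, hb, _⟩
      · exact ⟨a, ha ▸ p.start_mem_support⟩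
      · exact absurd hb (by simp)
  -- the left vertices in the support form a nonempty finset
  set t : Finset (A ⊕ B) := p.support.toFinset.filter (fun z => z.isLeft) with ht
  have htne : t.Nonempty := by
    obtain ⟨a, ha⟩ := hA
    exact ⟨Sum.inl a, by simp [ht, ha]⟩
  obtain ⟨z, hzt, hzmax⟩ := Finset.exists_max_image t (Sum.elim f (fun _ => 0)) htne
  obtain ⟨hz_sup, hz_left⟩ := Finset.mem_filter.mp hzt
  obtain ⟨astar, rfl⟩ := Sum.isLeft_iff.mp hz_left
  rw [List.mem_toFinset] at hz_sup
  have hmax : ∀ a' : A, Sum.inl a' ∈ p.support → f a' ≤ f astar := by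
    intro a' ha'
    have := hzmax (Sum.inl a') (Finset.mem_filter.mpr ⟨List.mem_toFinset.mpr ha', rfl⟩)
    simpa using this
  -- two neighbors of astar
  obtain ⟨x, y, hxy, hax, hay, hxs, hys⟩ := two_neighbors_of_isCycle hp hz_sup
  obtain ⟨b₁, rfl, hE1⟩ := adj_inl astar x hax
  obtain ⟨b₂, rfl, hE2⟩ := adj_inl astar y hay
  have hb12 : b₁ ≠ b₂ := fun h => hxy (by rw [h])
  -- key symmetric step
  have key : ∀ b b' : B, E astar b → E astar b' → g b < g b' → Sum.inr b' ∈ p.support → False := by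
    intro b b' hEb hEb' hgb hb's
    obtain ⟨x', y', hxy', hax', hay', hx's, hy's⟩ := two_neighbors_of_isCycle hp hb's
    obtain ⟨a₁, rfl, hEa1⟩ := adj_inr b' x' hax'
    obtain ⟨a₂, rfl, hEa2⟩ := adj_inr b' y' hay'
    have ha12 : a₁ ≠ a₂ := fun h => hxy' (by rw [h])
    -- pick a' ≠ astar among a₁, a₂
    obtain ⟨a', hEa', ha's, hane⟩ : ∃ a', E a' b' ∧ Sum.inl a' ∈ p.support ∧ a' ≠ astar := by
      by_cases h1 : a₁ = astar
      · exact ⟨a₂, hEa2, hy's, fun h => ha12 (h1 ▸ h ▸ rfl)⟩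
      · exact ⟨a₁, hEa1, hx's, h1⟩
    have hlt : f a' < f astar :=
      lt_of_le_of_ne (hmax a' ha's) (fun h => hane (hf h))
    exact hcf a' astar b' b hEa' hEb hane (fun h => (hg (congrArg g h) ▸ hgb).false) 
      (Or.inl ⟨hlt, hgb⟩)
  rcases lt_or_gt_of_ne (fun h => hb12 (hg h)) with hlt | hlt
  · exact key b₁ b₂ hE1 hE2 hlt hys
  · exact key b₂ b₁ hE2 hE1 hlt hxs
end
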